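/- The deflation projector admits the representation 𝒫 = I_{m+n} − K Z_k (Z_kᵀ K Z_k)⁻¹ Z_kᵀ. -/

import Mathlib

open Matrix

/-- The deflation projector admits the representation
`Pcal = I − K Z_k (Z_kᵀ K Z_k)⁻¹ Z_kᵀ`. -/
theorem deflation_projector_representation (m n k : ℕ)
    (M : Matrix (Fin m) (Fin m) ℝ) (N : Matrix (Fin n) (Fin n) ℝ)
    (A : Matrix (Fin m) (Fin n) ℝ)
    (hM : M.PosDef) (hN : N.PosDef)
    (Uk : Matrix (Fin m) (Fin k) ℝ) (Vk : Matrix (Fin n) (Fin k) ℝ)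
    (Sig : Matrix (Fin k) (Fin k) ℝ)
    (hSigDiag : ∀ i j, i ≠ j → Sig i j = 0) (hSigNonneg : ∀ i, 0 ≤ Sig i i)
    (hUk : Ukᵀ * M * Uk = 1) (hVk : Vkᵀ * N * Vk = 1)
    (hAV : A * Vk = M * Uk * Sig) (hAU : Aᵀ * Uk = N * Vk * Sig)
    (P : Matrix (Fin m) (Fin m) ℝ) (hP : P = 1 - M * Uk * Ukᵀ)
    (Q : Matrix (Fin n) (Fin n) ℝ) (hQ : Q = 1 - Vk * Vkᵀ * N)
    (K : Matrix (Fin m ⊕ Fin n) (Fin m ⊕ Fin n) ℝ)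
    (hK : K = Matrix.fromBlocks M A Aᵀ (-N))
    (Pcal : Matrix (Fin m ⊕ Fin n) (Fin m ⊕ Fin n) ℝ)
    (hPcal : Pcal = Matrix.fromBlocks P 0 0 Qᵀ)
    (Z : Matrix (Fin m ⊕ Fin n) (Fin k ⊕ Fin k) ℝ)
    (hZ : Z = Matrix.fromBlocks Uk 0 0 Vk) :
    Pcal = 1 - K * Z * (Zᵀ * K * Z)⁻¹ * Zᵀ := by
  -- N is symmetric
  have hNs : Nᵀ = N := by
    have := hN.isHermitian
    rwa [Matrix.IsHermitian, conjTranspose_eq_transpose_of_trivial] at this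
  -- Sig is diagonal
  set d : Fin k → ℝ := fun i => Sig i i with hd
  have hSd : Sig = Matrix.diagonal d := by
    ext i j
    by_cases h : i = j
    · subst h; simp [Matrix.diagonal]; rfl
    · simp [Matrix.diagonal, h, hSigDiag i j h]
  have hpos : ∀ i, 1 + d i * d i ≠ 0 := fun i =>
    ne_of_gt (by nlinarith [hSigNonneg i, sq_nonneg (d i)])
  set E : Matrix (Fin k) (Fin k) ℝ := Matrix.diagonal (fun i => (1 + d i * d i)⁻¹) with hE
  have hSE : Sig * E = E * Sig := by
    rw [hSd, hE, diagonal_mul_diagonal, diagonal_mul_diagonal]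
    apply congrArg; funext i; ring
  have hDE : E + Sig * (Sig * E) = 1 := by
    rw [hSd, hE, diagonal_mul_diagonal, diagonal_mul_diagonal, diagonal_add,
      ← diagonal_one]
    apply congrArg; funext i
    field_simp
  -- K * Z
  have hKZ : K * Z = fromBlocks (M * Uk) (M * Uk * Sig) (N * Vk * Sig) (-(N * Vk)) := by
    rw [hK, hZ, fromBlocks_multiply]
    simp [hAV, hAU, Matrix.neg_mul]
  have hZt : Zᵀ = fromBlocks Ukᵀ 0 0 Vkᵀ := by
    rw [hZ, fromBlocks_transpose]; simp
  -- Zᵀ K Z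
  have h1 : Ukᵀ * (M * Uk) = 1 := by rw [← Matrix.mul_assoc]; exact hUk
  have h2 : Vkᵀ * (N * Vk) = 1 := by rw [← Matrix.mul_assoc]; exact hVk
  have h3 : Ukᵀ * (M * Uk * Sig) = Sig := by
    rw [← Matrix.mul_assoc, ← Matrix.mul_assoc, hUk, Matrix.one_mul]
  have h4 : Vkᵀ * (N * Vk * Sig) = Sig := by
    rw [← Matrix.mul_assoc, ← Matrix.mul_assoc, hVk, Matrix.one_mul]
  have hW : Zᵀ * K * Z = fromBlocks 1 Sig Sig (-1) := by
    rw [Matrix.mul_assoc, hKZ, hZt, fromBlocks_multiply]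
    simp [h1, h2, h3, h4, Matrix.mul_neg]
  have hWinv : (Zᵀ * K * Z)⁻¹ = fromBlocks E (E * Sig) (Sig * E) (-E) := by
    apply inv_eq_right_inv
    rw [hW, fromBlocks_multiply]
    have tl : 1 * E + Sig * (Sig * E) = 1 := by rw [Matrix.one_mul]; exact hDE
    have tr : 1 * (E * Sig) + Sig * -E = 0 := by
      rw [Matrix.one_mul, Matrix.mul_neg, hSE, add_neg_cancel]
    have bl : Sig * E + -1 * (Sig * E) = 0 := by
      rw [neg_one_mul, add_neg_cancel]
    have br : Sig * (E * Sig) + -1 * -E = 1 := by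
      rw [neg_one_mul, neg_neg, ← hSE, add_comm]; exact hDE
    rw [tl, tr, bl, br, fromBlocks_one]
  -- K Z (ZᵀKZ)⁻¹
  have hKZW : K * Z * (Zᵀ * K * Z)⁻¹ = fromBlocks (M * Uk) 0 0 (N * Vk) := by
    rw [hKZ, hWinv, fromBlocks_multiply]
    have tl : M * Uk * E + M * Uk * Sig * (Sig * E) = M * Uk := by
      rw [Matrix.mul_assoc (M * Uk) Sig, ← Matrix.mul_add, hDE, Matrix.mul_one]
    have tr : M * Uk * (E * Sig) + M * Uk * Sig * -E = 0 := by
      rw [Matrix.mul_neg, Matrix.mul_assoc (M * Uk) Sig, hSE, add_neg_cancel]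
    have bl : N * Vk * Sig * E + -(N * Vk) * (Sig * E) = 0 := by
      rw [Matrix.neg_mul, Matrix.mul_assoc (N * Vk) Sig, add_neg_cancel]
    have br : N * Vk * Sig * (E * Sig) + -(N * Vk) * -E = N * Vk := by
      rw [Matrix.neg_mul, Matrix.mul_neg, neg_neg, ← hSE, Matrix.mul_assoc (N * Vk) Sig,
        ← Matrix.mul_add, add_comm, hDE, Matrix.mul_one]
    rw [tl, tr, bl, br]
  -- assemble
  have hfinal : K * Z * (Zᵀ * K * Z)⁻¹ * Zᵀ
      = fromBlocks (M * Uk * Ukᵀ) 0 0 (N * Vk * Vkᵀ) := by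
    rw [hKZW, hZt, fromBlocks_multiply]
    simp
  have hQt : (1 - Vk * Vkᵀ * N)ᵀ = 1 - N * Vk * Vkᵀ := by
    rw [transpose_sub, transpose_one, transpose_mul, transpose_mul, transpose_transpose,
      hNs, Matrix.mul_assoc]
  rw [hPcal, hP, hQ, hfinal, hQt]
  ext (i | i) (j | j) <;> simp [Matrix.fromBlocks, Matrix.one_apply]
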